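/- Let M̃ be the n×n integer matrix with M̃ e_j = e_{j-1} for 2 ≤ j ≤ n and M̃ e_1 = -c e_n (the companion matrix of x^n + c), and let Z_0 = {ξ ∈ R^n : ξ_n = k + i/q for some k ∈ Z, 1 ≤ i ≤ q-1}. If gcd(q, c) = 1, then (M̃^*)^n (Z_0) ⊆ Z_0. -/

import Mathlib

open Matrix

lemma stmt13_pow (n : ℕ) (hn : 0 < n) (c : ℤ)
    (Mt : Matrix (Fin n) (Fin n) ℤ)
    (hM : ∀ i j : Fin n, Mt i j =
      (if (j : ℕ) = 0 then (if (i : ℕ) = n - 1 then -c else 0)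
       else if (i : ℕ) + 1 = (j : ℕ) then 1 else 0)) :
    ∀ k, k ≤ n → ∀ i j : Fin n, (Mt ^ k) i j =
      if k ≤ (j : ℕ) then (if (i : ℕ) = (j : ℕ) - k then (1 : ℤ) else 0)
      else (if (i : ℕ) = n - k + (j : ℕ) then -c else 0) := by
  intro k
  induction k with
  | zero =>
    intro _ i j
    simp [Matrix.one_apply, Fin.ext_iff]
  | succ k ih =>
    intro hk i j
    rw [pow_succ, Matrix.mul_apply]
    by_cases hj : (j : ℕ) = 0
    · have h1 : ∀ l : Fin n, (Mt ^ k) i l * Mt l j =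
          if l = (⟨n - 1, by omega⟩ : Fin n) then (Mt ^ k) i l * -c else 0 := by
        intro l
        rw [hM, if_pos hj]
        by_cases hl : l = (⟨n - 1, by omega⟩ : Fin n)
        · rw [if_pos hl, if_pos]
          subst hl; rfl
        · rw [if_neg hl, if_neg, mul_zero]
          intro h; exact hl (Fin.ext h)
      rw [Finset.sum_congr rfl (fun l _ => h1 l), Finset.sum_ite_eq' Finset.univ]
      simp only [Finset.mem_univ, if_true]
      rw [ih (by omega)]
      rw [if_neg (show ¬ (k + 1 ≤ (j:ℕ)) by omega)]
      rw [if_pos (show k ≤ ((⟨n - 1, by omega⟩ : Fin n) : ℕ) by simp; omega)]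
      have hi := i.isLt
      have hc : ((⟨n - 1, by omega⟩ : Fin n) : ℕ) = n - 1 := rfl
      rw [hc]
      split_ifs with h1 h2 h2 <;> first | rfl | omega
    · have hj1 : (j : ℕ) - 1 < n := by omega
      have h1 : ∀ l : Fin n, (Mt ^ k) i l * Mt l j =
          if l = (⟨(j : ℕ) - 1, hj1⟩ : Fin n) then (Mt ^ k) i l else 0 := by
        intro l
        rw [hM, if_neg hj]
        by_cases hl : l = (⟨(j : ℕ) - 1, hj1⟩ : Fin n)
        · rw [if_pos hl, if_pos, mul_one]
          subst hl; simp; omega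
        · rw [if_neg hl, if_neg, mul_zero]
          intro h; apply hl; apply Fin.ext; simp; omega
      rw [Finset.sum_congr rfl (fun l _ => h1 l), Finset.sum_ite_eq' Finset.univ]
      simp only [Finset.mem_univ, if_true]
      rw [ih (by omega)]
      have hi := i.isLt
      have hjlt := j.isLt
      have hc : ((⟨(j : ℕ) - 1, hj1⟩ : Fin n) : ℕ) = (j : ℕ) - 1 := rfl
      rw [hc]
      split_ifs <;> first | rfl | omega

/-- Let `M̃` be the companion matrix of `x^n + c`
(`M̃ e_j = e_{j-1}` for `j ≥ 2`, `M̃ e_1 = -c e_n`), and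
`Z_0 = {ξ ∈ ℝ^n : ξ_n = k + i/q, k ∈ ℤ, 1 ≤ i ≤ q-1}`. If `gcd(q, c) = 1`
then `(M̃ᵀ)^n (Z_0) ⊆ Z_0`. -/
theorem stmt_13 (n : ℕ) (hn : 0 < n) (q c : ℤ) (hq : 2 ≤ q)
    (hgcd : IsCoprime q c)
    (Mt : Matrix (Fin n) (Fin n) ℤ)
    (hM : ∀ i j : Fin n, Mt i j =
      (if (j : ℕ) = 0 then (if (i : ℕ) = n - 1 then -c else 0)
       else if (i : ℕ) + 1 = (j : ℕ) then 1 else 0))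
    (Z0 : Set (Fin n → ℝ))
    (hZ0 : Z0 = {ξ : Fin n → ℝ | ∃ k i : ℤ, 1 ≤ i ∧ i ≤ q - 1 ∧
      ξ ⟨n - 1, by omega⟩ = (k : ℝ) + (i : ℝ) / (q : ℝ)}) :
    (fun ξ : Fin n → ℝ => ((Mt.transpose ^ n).map (Int.cast : ℤ → ℝ)) *ᵥ ξ) '' Z0 ⊆ Z0 := by
  have hpow : Mt ^ n = (-c) • (1 : Matrix (Fin n) (Fin n) ℤ) := by
    ext i j
    rw [stmt13_pow n hn c Mt hM n le_rfl i j]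
    rw [if_neg (show ¬ (n ≤ (j : ℕ)) by have := j.isLt; omega)]
    rw [show n - n + (j : ℕ) = (j : ℕ) by omega]
    rw [Matrix.smul_apply, Matrix.one_apply]
    by_cases h : i = j
    · rw [if_pos h, if_pos (by rw [h]), smul_eq_mul, mul_one]
    · rw [if_neg h, if_neg (fun hh => h (Fin.ext hh)), smul_zero]
  have htpow : Mt.transpose ^ n = (-c) • (1 : Matrix (Fin n) (Fin n) ℤ) := by
    rw [← Matrix.transpose_pow, hpow, Matrix.transpose_smul, Matrix.transpose_one]
  have hmap : ((-c • (1 : Matrix (Fin n) (Fin n) ℤ)).map (Int.cast : ℤ → ℝ))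
      = ((-c : ℤ) : ℝ) • (1 : Matrix (Fin n) (Fin n) ℝ) := by
    ext i j
    rw [Matrix.map_apply, Matrix.smul_apply, Matrix.smul_apply, Matrix.one_apply,
      Matrix.one_apply]
    split_ifs <;> simp
  rintro x ⟨ξ, hξ, rfl⟩
  rw [hZ0] at hξ
  obtain ⟨k0, i0, hi1, hi2, hval⟩ := hξ
  rw [hZ0]
  have hq0 : (q : ℝ) ≠ 0 := by
    have : (0:ℝ) < (q:ℝ) := by exact_mod_cast (by omega : (0:ℤ) < q)
    linarith
  have hmv : (((Mt.transpose ^ n).map (Int.cast : ℤ → ℝ)) *ᵥ ξ) ⟨n - 1, by omega⟩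
      = (-c : ℝ) * ξ ⟨n - 1, by omega⟩ := by
    rw [htpow, hmap, Matrix.smul_mulVec, Matrix.one_mulVec]
    push_cast
    simp
  set r : ℤ := (-c * i0) % q with hr
  set d : ℤ := (-c * i0) / q with hd
  have hqpos : (0 : ℤ) < q := by omega
  have hrd : q * d + r = -c * i0 := Int.mul_ediv_add_emod _ _
  have hr0 : 0 ≤ r := Int.emod_nonneg _ (by omega)
  have hrlt : r < q := Int.emod_lt_of_pos _ hqpos
  have hrne : r ≠ 0 := by
    intro h0
    have hdvd : q ∣ -c * i0 := Int.dvd_of_emod_eq_zero h0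
    have hdvd2 : q ∣ c * i0 := by
      rw [neg_mul] at hdvd
      exact (dvd_neg).mp hdvd
    have hdvd3 : q ∣ i0 := hgcd.dvd_of_dvd_mul_left hdvd2
    have := Int.le_of_dvd (by omega) hdvd3
    omega
  refine ⟨-c * k0 + d, r, by omega, by omega, ?_⟩
  show (((Mt.transpose ^ n).map (Int.cast : ℤ → ℝ)) *ᵥ ξ) ⟨n - 1, by omega⟩ = _
  rw [hmv, hval]
  have hcast : ((q : ℝ) * (d : ℝ) + (r : ℝ)) = (-c : ℝ) * (i0 : ℝ) := by
    exact_mod_cast congrArg (Int.cast : ℤ → ℝ) hrd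
  field_simp
  push_cast
  linear_combination (-1:ℝ) * hcast
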